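/- arXiv:1802.08170 — 3 statements merged into one kernel-verified Lean document; each statement's English description precedes it below -/
import Mathlib

section
/- A T0 topological space is a sober C-space if and only if it is the Scott space of a (unique) continuous dcpo. -/
variable {X : Type*} [TopologicalSpace X]

/-- The specialization preorder: x ≤ y iff every open set containing x contains y. -/
def sle (x y : X) : Prop := ∀ U : Set X, IsOpen U → x ∈ U → y ∈ U

/-- The core of a point. -/
def core (x : X) : Set X := {y | sle x y}

/-- Directed set w.r.t. the specialization preorder. -/
def dirUp (D : Set X) : Prop :=
  D.Nonempty ∧ ∀ a ∈ D, ∀ b ∈ D, ∃ c ∈ D, sle a c ∧ sle b c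

/-- Least upper bound w.r.t. the specialization preorder. -/
def lub (D : Set X) (y : X) : Prop :=
  (∀ d ∈ D, sle d y) ∧ ∀ z, (∀ d ∈ D, sle d z) → sle y z

/-- The way-below relation of the specialization preorder. -/
def wb (x y : X) : Prop :=
  ∀ D : Set X, dirUp D → ∀ s, lub D s → sle y s → ∃ d ∈ D, sle x d

/- ### Auxiliary lemmas -/

theorem sle_refl (x : X) : sle x x := fun _ _ h => h

theorem sle_trans {x y z : X} (h1 : sle x y) (h2 : sle y z) : sle x z :=
  fun U hU hx => h2 U hU (h1 U hU hx)

theorem sle_antisymm [T0Space X] {x y : X} (h1 : sle x y) (h2 : sle y x) : x = y := by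
  apply Inseparable.eq
  rw [inseparable_iff_forall_isOpen]
  exact fun U hU => ⟨fun hx => h1 U hU hx, fun hy => h2 U hU hy⟩

theorem mem_closure_singleton_iff {x y : X} : y ∈ closure ({x} : Set X) ↔ sle y x := by
  rw [mem_closure_iff]
  constructor
  · intro h U hU hy
    obtain ⟨z, hz, hz'⟩ := h U hU hy
    rwa [Set.mem_singleton_iff.1 hz'] at hz
  · intro h U hU hy
    exact ⟨x, h U hU hy, rfl⟩

theorem closed_lower {A : Set X} (hA : IsClosed A) {x y : X} (hy : y ∈ A) (h : sle x y) :
    x ∈ A := by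
  by_contra hx
  exact (h Aᶜ hA.isOpen_compl hx) hy

theorem wb_of_le_left {a u y : X} (hau : sle a u) (h : wb u y) : wb a y := by
  intro D hD s hs hys
  obtain ⟨d, hd, hud⟩ := h D hD s hs hys
  exact ⟨d, hd, sle_trans hau hud⟩

theorem wb_of_le_right {x y y' : X} (h : wb x y) (hyy' : sle y y') : wb x y' := by
  intro D hD s hs hys
  exact h D hD s hs (sle_trans hyy' hys)

theorem wb_le {x y : X} (h : wb x y) : sle x y := by
  have hsing : dirUp ({y} : Set X) :=
    ⟨⟨y, rfl⟩, fun a ha b hb => ⟨y, rfl, by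
      rw [Set.mem_singleton_iff] at ha hb
      exact ⟨ha ▸ sle_refl y, hb ▸ sle_refl y⟩⟩⟩
  have hlub : lub ({y} : Set X) y :=
    ⟨fun d hd => (Set.mem_singleton_iff.1 hd) ▸ sle_refl y,
     fun z hz => hz y rfl⟩
  obtain ⟨d, hd, hxd⟩ := h {y} hsing y hlub (sle_refl y)
  rwa [Set.mem_singleton_iff.1 hd] at hxd

section Sober

variable [T0Space X]

omit [T0Space X] in
/-- In a sober space, every directed set has a lub, which lies in the closure of the set. -/
theorem sober_lub
    (hsob : ∀ C : Set X, IsClosed C → C.Nonempty →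
      (∀ A B : Set X, IsClosed A → IsClosed B → C ⊆ A ∪ B → C ⊆ A ∨ C ⊆ B) →
      ∃! x : X, C = closure {x})
    {D : Set X} (hD : dirUp D) :
    ∃ x, lub D x ∧ x ∈ closure D := by
  have hirr : ∀ A B : Set X, IsClosed A → IsClosed B → closure D ⊆ A ∪ B →
      closure D ⊆ A ∨ closure D ⊆ B := by
    intro A B hA hB hsub
    by_contra hcon
    push_neg at hcon
    have hDA : ¬ D ⊆ A := fun h => hcon.1 (closure_minimal h hA)
    have hDB : ¬ D ⊆ B := fun h => hcon.2 (closure_minimal h hB)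
    obtain ⟨a, haD, haA⟩ := Set.not_subset.1 hDA
    obtain ⟨b, hbD, hbB⟩ := Set.not_subset.1 hDB
    obtain ⟨c, hcD, hac, hbc⟩ := hD.2 a haD b hbD
    have hc : c ∈ A ∪ B := hsub (subset_closure hcD)
    cases hc with
    | inl h => exact haA (closed_lower hA h hac)
    | inr h => exact hbB (closed_lower hB h hbc)
  obtain ⟨x, hx, _⟩ := hsob (closure D) isClosed_closure (hD.1.mono subset_closure) hirr
  refine ⟨x, ⟨?_, ?_⟩, ?_⟩
  · intro d hd
    have : d ∈ closure ({x} : Set X) := hx ▸ subset_closure hd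
    exact mem_closure_singleton_iff.1 this
  · intro z hz
    have hsub : D ⊆ closure ({z} : Set X) := fun d hd =>
      mem_closure_singleton_iff.2 (hz d hd)
    have : closure D ⊆ closure ({z} : Set X) := closure_minimal hsub isClosed_closure
    have hxz : x ∈ closure ({z} : Set X) := this (hx ▸ subset_closure rfl)
    exact mem_closure_singleton_iff.1 hxz
  · exact hx ▸ subset_closure rfl

/-- In a sober space, the lub of a directed set lies in its closure. -/
theorem lub_mem_closure
    (hsob : ∀ C : Set X, IsClosed C → C.Nonempty →
      (∀ A B : Set X, IsClosed A → IsClosed B → C ⊆ A ∪ B → C ⊆ A ∨ C ⊆ B) →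
      ∃! x : X, C = closure {x})
    {D : Set X} (hD : dirUp D) {y : X} (hy : lub D y) : y ∈ closure D := by
  obtain ⟨x, hx, hxc⟩ := sober_lub hsob hD
  have : x = y := sle_antisymm (hx.2 y hy.1) (hy.2 x hx.1)
  exact this ▸ hxc

end Sober

section CSpace

variable (hC : ∀ (x : X) (U : Set X), IsOpen U → x ∈ U →
    ∃ u : X, x ∈ interior (core u) ∧ core u ⊆ U)

include hC

/-- In a C-space, the set of points whose core-interior contains `x` is directed
with lub `x`. -/
theorem cspace_basis (x : X) :
    dirUp {u : X | x ∈ interior (core u)} ∧ lub {u : X | x ∈ interior (core u)} x := by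
  constructor
  · constructor
    · obtain ⟨u, hu, _⟩ := hC x Set.univ isOpen_univ trivial
      exact ⟨u, hu⟩
    · intro a ha b hb
      have hab : x ∈ interior (core a) ∩ interior (core b) := ⟨ha, hb⟩
      obtain ⟨w, hw, hwsub⟩ := hC x _ (isOpen_interior.inter isOpen_interior) hab
      have hww : w ∈ core w := sle_refl w
      have h1 : w ∈ core a := interior_subset (hwsub hww).1
      have h2 : w ∈ core b := interior_subset (hwsub hww).2
      exact ⟨w, hw, h1, h2⟩
  · constructor
    · intro u hu
      exact interior_subset hu
    · intro z hz U hU hx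
      obtain ⟨u, hu, husub⟩ := hC x U hU hx
      exact husub (hz u hu)

end CSpace

/-- A T0 space is a sober C-space iff it is the Scott space of a
continuous dcpo, i.e. its specialization order is a continuous dcpo whose Scott
topology is the given topology. -/
theorem stmt_14 [T0Space X] :
    ((∀ C : Set X, IsClosed C → C.Nonempty →
        (∀ A B : Set X, IsClosed A → IsClosed B → C ⊆ A ∪ B → C ⊆ A ∨ C ⊆ B) →
        ∃! x : X, C = closure {x}) ∧
     (∀ (x : X) (U : Set X), IsOpen U → x ∈ U →
        ∃ u : X, x ∈ interior (core u) ∧ core u ⊆ U)) ↔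
    ((∀ D : Set X, dirUp D → ∃ y, lub D y) ∧
     (∀ y : X, dirUp {x | wb x y} ∧ lub {x | wb x y} y) ∧
     (∀ U : Set X, IsOpen U ↔
        ((∀ x ∈ U, ∀ y, sle x y → y ∈ U) ∧
         ∀ D : Set X, dirUp D → ∀ y, lub D y → y ∈ U → (D ∩ U).Nonempty))) := by
  constructor
  · rintro ⟨hsob, hC⟩
    -- key: membership in the interior of a core gives way-below
    have hwb_int : ∀ (u y : X), y ∈ interior (core u) → wb u y := by
      intro u y hy D hD s hs hys
      have hsint : s ∈ interior (core u) := hys _ isOpen_interior hy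
      have hscl : s ∈ closure D := lub_mem_closure hsob hD hs
      obtain ⟨d, hd, hdD⟩ := mem_closure_iff.1 hscl _ isOpen_interior hsint
      exact ⟨d, hdD, interior_subset hd⟩
    -- way-below is witnessed by core interiors
    have hwb_char : ∀ (a y : X), wb a y → ∃ u, y ∈ interior (core u) ∧ sle a u := by
      intro a y h
      obtain ⟨hdir, hlub⟩ := cspace_basis hC y
      obtain ⟨u, hu, hau⟩ := h _ hdir y hlub (sle_refl y)
      exact ⟨u, hu, hau⟩
    refine ⟨?_, ?_, ?_⟩
    · intro D hD
      obtain ⟨x, hx, _⟩ := sober_lub hsob hD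
      exact ⟨x, hx⟩
    · intro y
      obtain ⟨hdir, hlub⟩ := cspace_basis hC y
      constructor
      · constructor
        · obtain ⟨u, hu⟩ := hdir.1
          exact ⟨u, hwb_int u y hu⟩
        · intro a ha b hb
          obtain ⟨u, hu, hau⟩ := hwb_char a y ha
          obtain ⟨v, hv, hbv⟩ := hwb_char b y hb
          obtain ⟨w, hw, huw, hvw⟩ := hdir.2 u hu v hv
          exact ⟨w, hwb_int w y hw, sle_trans hau huw, sle_trans hbv hvw⟩
      · constructor
        · intro d hd
          exact wb_le hd
        · intro z hz
          refine hlub.2 z ?_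
          intro u hu
          exact hz u (hwb_int u y hu)
    · intro U
      constructor
      · intro hU
        refine ⟨fun x hx y hxy => hxy U hU hx, ?_⟩
        intro D hD y hy hyU
        have hycl : y ∈ closure D := lub_mem_closure hsob hD hy
        obtain ⟨d, hdU, hdD⟩ := mem_closure_iff.1 hycl U hU hyU
        exact ⟨d, hdD, hdU⟩
      · rintro ⟨hupper, hscott⟩
        rw [isOpen_iff_forall_mem_open]
        intro x hx
        obtain ⟨hdir, hlub⟩ := cspace_basis hC x
        obtain ⟨u, huD, huU⟩ := hscott _ hdir x hlub hx
        refine ⟨interior (core u), ?_, isOpen_interior, huD⟩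
        intro y hy
        exact hupper u huU y (interior_subset hy)
  · rintro ⟨hdc, hcont, htop⟩
    -- the way-above sets are open
    have hwbOpen : ∀ u : X, IsOpen {y : X | wb u y} := by
      -- interpolation
      have hinterp : ∀ u y : X, wb u y → ∃ w, wb u w ∧ wb w y := by
        intro u y huy
        set E : Set X := {z : X | ∃ w, wb z w ∧ wb w y} with hE
        have hEdir : dirUp E := by
          constructor
          · obtain ⟨w, hw⟩ := (hcont y).1.1
            obtain ⟨z, hz⟩ := (hcont w).1.1
            exact ⟨z, w, hz, hw⟩
          · rintro z1 ⟨w1, hz1, hw1⟩ z2 ⟨w2, hz2, hw2⟩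
            obtain ⟨w, hw, hw1w, hw2w⟩ := (hcont y).1.2 w1 hw1 w2 hw2
            have hz1w : wb z1 w := wb_of_le_right hz1 hw1w
            have hz2w : wb z2 w := wb_of_le_right hz2 hw2w
            obtain ⟨d1, hd1, hz1d1⟩ := hz1w _ (hcont w).1 w (hcont w).2 (sle_refl w)
            obtain ⟨d2, hd2, hz2d2⟩ := hz2w _ (hcont w).1 w (hcont w).2 (sle_refl w)
            obtain ⟨d, hd, hd1d, hd2d⟩ := (hcont w).1.2 d1 hd1 d2 hd2
            exact ⟨d, ⟨w, hd, hw⟩, sle_trans hz1d1 hd1d, sle_trans hz2d2 hd2d⟩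
        have hElub : lub E y := by
          constructor
          · rintro z ⟨w, hzw, hwy⟩
            exact sle_trans (wb_le hzw) (wb_le hwy)
          · intro s hs
            refine (hcont y).2.2 s ?_
            intro w hw
            refine (hcont w).2.2 s ?_
            intro z hz
            exact hs z ⟨w, hz, hw⟩
        obtain ⟨z, ⟨w, hzw, hwy⟩, huz⟩ := huy E hEdir y hElub (sle_refl y)
        exact ⟨w, wb_of_le_left huz hzw, hwy⟩
      intro u
      rw [htop]
      constructor
      · intro x hx y hxy
        exact wb_of_le_right hx hxy
      · intro D hD y hy hyU
        obtain ⟨w, huw, hwy⟩ := hinterp u y hyU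
        obtain ⟨d, hd, hwd⟩ := hwy D hD y hy (sle_refl y)
        exact ⟨d, hd, wb_of_le_right huw hwd⟩
    constructor
    · -- sobriety
      intro C hCcl hCne hirr
      -- C is a lower set closed under directed lubs
      have hCopen := (htop Cᶜ).1 hCcl.isOpen_compl
      have hlower : ∀ y ∈ C, ∀ x, sle x y → x ∈ C := fun y hy x hxy =>
        closed_lower hCcl hy hxy
      have hdclosed : ∀ D : Set X, dirUp D → D ⊆ C → ∀ y, lub D y → y ∈ C := by
        intro D hD hDC y hy
        by_contra hyC
        obtain ⟨d, hdD, hdC⟩ := hCopen.2 D hD y hy hyC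
        exact hdC (hDC hdD)
      set D : Set X := {u : X | ∃ c ∈ C, wb u c} with hDdef
      have hDdir : dirUp D := by
        constructor
        · obtain ⟨c, hc⟩ := hCne
          obtain ⟨u, hu⟩ := (hcont c).1.1
          exact ⟨u, c, hc, hu⟩
        · rintro u1 ⟨c1, hc1, hu1⟩ u2 ⟨c2, hc2, hu2⟩
          -- find c ∈ C with u1 ≪ c and u2 ≪ c, using irreducibility
          have h1 : ¬ C ⊆ {y : X | wb u1 y}ᶜ := fun h => (h hc1) hu1
          have h2 : ¬ C ⊆ {y : X | wb u2 y}ᶜ := fun h => (h hc2) hu2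
          have hnu : ¬ C ⊆ {y : X | wb u1 y}ᶜ ∪ {y : X | wb u2 y}ᶜ := by
            intro h
            rcases hirr _ _ (hwbOpen u1).isClosed_compl (hwbOpen u2).isClosed_compl h with
              h' | h'
            · exact h1 h'
            · exact h2 h'
          obtain ⟨c, hcC, hc⟩ := Set.not_subset.1 hnu
          rw [Set.mem_union, not_or] at hc
          have hc1' : wb u1 c := not_not.1 hc.1
          have hc2' : wb u2 c := not_not.1 hc.2
          obtain ⟨w, hw, h1w, h2w⟩ := (hcont c).1.2 u1 hc1' u2 hc2'
          exact ⟨w, ⟨c, hcC, hw⟩, h1w, h2w⟩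
      obtain ⟨x, hx⟩ := hdc D hDdir
      have hDC : D ⊆ C := by
        rintro u ⟨c, hc, huc⟩
        exact hlower c hc u (wb_le huc)
      have hxC : x ∈ C := hdclosed D hDdir hDC x hx
      have hmax : ∀ c ∈ C, sle c x := by
        intro c hc
        refine (hcont c).2.2 x ?_
        intro u hu
        exact hx.1 u ⟨c, hc, hu⟩
      refine ⟨x, ?_, ?_⟩
      · ext y
        rw [mem_closure_singleton_iff]
        exact ⟨fun hy => hmax y hy, fun hy => hlower x hxC y hy⟩
      · intro x' hx'
        have h1 : x' ∈ closure ({x'} : Set X) := subset_closure rfl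
        rw [← hx'] at h1
        have h2 : x ∈ closure ({x'} : Set X) := hx' ▸ hxC
        exact sle_antisymm (hmax x' h1) (mem_closure_singleton_iff.1 h2)
    · -- C-space
      intro x U hU hx
      have hscott := (htop U).1 hU
      obtain ⟨u, hu, huU⟩ := hscott.2 _ (hcont x).1 x (hcont x).2 hx
      refine ⟨u, ?_, ?_⟩
      · have hsub : {y : X | wb u y} ⊆ core u := fun y hy => wb_le hy
        exact interior_maximal hsub (hwbOpen u) hu
      · intro y hy
        exact hscott.1 u huU y hy
end

section
/- Let T = (X, ≤, T) be a semi-qospace (principal ideals and principal filters are closed). Then T is C-stable if and only if T is ↑-stable and the upper space (X, T^≤) is a C-space, where T^≤ is the topology of open upper sets. -/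
/-- The upper space topology: open upper sets of an ordered topological space. -/
def upperTop (X : Type*) [Preorder X] [TopologicalSpace X] : TopologicalSpace X where
  IsOpen U := IsOpen U ∧ ∀ a ∈ U, ∀ b, a ≤ b → b ∈ U
  isOpen_univ := ⟨isOpen_univ, fun _ _ _ _ => trivial⟩
  isOpen_inter := fun U V hU hV =>
    ⟨hU.1.inter hV.1, fun a ha b hb => ⟨hU.2 a ha.1 b hb, hV.2 a ha.2 b hb⟩⟩
  isOpen_sUnion := fun S hS =>
    ⟨isOpen_sUnion fun U hU => (hS U hU).1, fun a ha b hb => by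
      obtain ⟨U, hU, haU⟩ := ha
      exact ⟨U, hU, (hS U hU).2 a haU b hb⟩⟩

/-- Core of a point w.r.t. a topology. -/
def coreT {X : Type*} (t : TopologicalSpace X) (u : X) : Set X :=
  {y | ∀ O : Set X, t.IsOpen O → u ∈ O → y ∈ O}

/-- C-space condition for a topology: every point has a neighborhood base of cores. -/
def IsCSpaceT {X : Type*} (t : TopologicalSpace X) : Prop :=
  ∀ (x : X) (U : Set X), t.IsOpen U → x ∈ U →
    ∃ (u : X) (V : Set X), t.IsOpen V ∧ x ∈ V ∧ V ⊆ coreT t u ∧ coreT t u ⊆ U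

/-- In a semi-qospace, the core of `u` in the upper topology is contained in `↑u`. -/
lemma core_subset_up {X : Type*} [Preorder X] [TopologicalSpace X]
    (hsemi : ∀ x : X, IsClosed {y | y ≤ x} ∧ IsClosed {y | x ≤ y}) (u : X) :
    coreT (upperTop X) u ⊆ {y | u ≤ y} := by
  intro y hy
  by_contra hne
  have hO : (upperTop X).IsOpen {z | ¬ z ≤ y} := by
    constructor
    · exact (hsemi y).1.isOpen_compl
    · intro a ha b hab hb
      exact ha (hab.trans hb)
  exact (hy _ hO hne) (le_refl y)

/-- `↑u` is contained in the core of `u` in the upper topology. -/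
lemma up_subset_core {X : Type*} [Preorder X] [TopologicalSpace X] (u : X) :
    {y | u ≤ y} ⊆ coreT (upperTop X) u := by
  intro y hy O hO huO
  exact hO.2 u huO y hy

/-- A semi-qospace is C-stable iff it is ↑-stable and its upper
space is a C-space. -/
theorem stmt_16 {X : Type*} [Preorder X] [TopologicalSpace X]
    (hsemi : ∀ x : X, IsClosed {y | y ≤ x} ∧ IsClosed {y | x ≤ y}) :
    (∀ O : Set X, IsOpen O →
      {y | ∃ x ∈ O, x ≤ y} = ⋃ u ∈ O, interior {y | u ≤ y}) ↔
    ((∀ O : Set X, IsOpen O → IsOpen {y | ∃ x ∈ O, x ≤ y}) ∧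
      IsCSpaceT (upperTop X)) := by
  constructor
  · intro hC
    have hstab : ∀ O : Set X, IsOpen O → IsOpen {y | ∃ x ∈ O, x ≤ y} := by
      intro O hO
      rw [hC O hO]
      exact isOpen_biUnion fun u _ => isOpen_interior
    refine ⟨hstab, ?_⟩
    intro x U hU hxU
    -- U is an open upper set, so ↑U = U
    have hUeq : {y | ∃ z ∈ U, z ≤ y} = U := by
      ext y
      constructor
      · rintro ⟨z, hz, hzy⟩
        exact hU.2 z hz y hzy
      · intro hy
        exact ⟨y, hy, le_refl y⟩
    have hx' : x ∈ ⋃ u ∈ U, interior {y | u ≤ y} := by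
      rw [← hC U hU.1, hUeq]; exact hxU
    simp only [Set.mem_iUnion] at hx'
    obtain ⟨u, hu, hxint⟩ := hx'
    refine ⟨u, {y | ∃ z ∈ interior {y | u ≤ y}, z ≤ y}, ?_, ?_, ?_, ?_⟩
    · constructor
      · exact hstab _ isOpen_interior
      · rintro a ⟨z, hz, hza⟩ b hab
        exact ⟨z, hz, hza.trans hab⟩
    · exact ⟨x, hxint, le_refl x⟩
    · rintro y ⟨z, hz, hzy⟩
      have huz : u ≤ z := interior_subset hz
      exact up_subset_core u (huz.trans hzy)
    · intro y hy
      exact hy U hU hu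
  · rintro ⟨hstab, hCsp⟩ O hO
    apply Set.Subset.antisymm
    · rintro y ⟨x, hx, hxy⟩
      have hupO : (upperTop X).IsOpen {y | ∃ x ∈ O, x ≤ y} := by
        refine ⟨hstab O hO, ?_⟩
        rintro a ⟨z, hz, hza⟩ b hab
        exact ⟨z, hz, hza.trans hab⟩
      obtain ⟨u', V, hV, hyV, hVc, hcU⟩ := hCsp y _ hupO ⟨x, hx, hxy⟩
      have hu' : u' ∈ {y | ∃ x ∈ O, x ≤ y} :=
        hcU (fun O hO h => h)
      obtain ⟨u, hu, huu'⟩ := hu'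
      have hVup : V ⊆ {z | u ≤ z} := fun z hz =>
        huu'.trans (core_subset_up hsemi u' (hVc hz))
      have : y ∈ interior {z | u ≤ z} :=
        interior_maximal hVup hV.1 hyV
      exact Set.mem_iUnion.2 ⟨u, Set.mem_iUnion.2 ⟨hu, this⟩⟩
    · intro y hy
      simp only [Set.mem_iUnion] at hy
      obtain ⟨u, hu, hy⟩ := hy
      exact ⟨u, hu, interior_subset hy⟩
end

section
/- Let (X, S) be a C-space with interior relation ρ (x ρ y iff y ∈ int ↑x). For a subset B of X, the following are equivalent: (1) B is ρ-dense (x ρ y implies x ρ b and b ρ y for some b ∈ B); (2) B is a core basis (for every open U and y ∈ U there is b ∈ B ∩ U with y ∈ int ↑b); (3) B is dense in the Skula topology generated by the open sets together with the closed sets of S. -/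
variable {X : Type*} [TopologicalSpace X]

/-- The interior relation: x ρ y iff y ∈ int(↑x). -/
def rho (x y : X) : Prop := y ∈ interior (core x)

/-- The Skula (strong patch) topology: generated by the open sets together
with the closed sets. -/
def skula (X : Type*) [TopologicalSpace X] : TopologicalSpace X :=
  TopologicalSpace.generateFrom {U : Set X | IsOpen U ∨ IsClosed U}

lemma skula_open_mem {V : Set X}
    (hV : TopologicalSpace.GenerateOpen {U : Set X | IsOpen U ∨ IsClosed U} V) :
    ∀ y ∈ V, ∃ U C : Set X, IsOpen U ∧ IsClosed C ∧ y ∈ U ∧ y ∈ C ∧ U ∩ C ⊆ V := by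
  induction hV with
  | basic W hW =>
    intro y hy
    rcases hW with h | h
    · exact ⟨W, Set.univ, h, isClosed_univ, hy, trivial, fun z hz => hz.1⟩
    · exact ⟨Set.univ, W, isOpen_univ, h, trivial, hy, fun z hz => hz.2⟩
  | univ =>
    intro y _
    exact ⟨Set.univ, Set.univ, isOpen_univ, isClosed_univ, trivial, trivial, fun _ _ => trivial⟩
  | inter V1 V2 _ _ ih1 ih2 =>
    intro y hy
    obtain ⟨U1, C1, hU1, hC1, hyU1, hyC1, hs1⟩ := ih1 y hy.1
    obtain ⟨U2, C2, hU2, hC2, hyU2, hyC2, hs2⟩ := ih2 y hy.2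
    exact ⟨U1 ∩ U2, C1 ∩ C2, hU1.inter hU2, hC1.inter hC2, ⟨hyU1, hyU2⟩, ⟨hyC1, hyC2⟩,
      fun z hz => ⟨hs1 ⟨hz.1.1, hz.2.1⟩, hs2 ⟨hz.1.2, hz.2.2⟩⟩⟩
  | sUnion S _ ih =>
    intro y hy
    obtain ⟨W, hWS, hyW⟩ := hy
    obtain ⟨U, C, hU, hc, hyU, hyC, hs⟩ := ih W hWS y hyW
    exact ⟨U, C, hU, hc, hyU, hyC, fun z hz => ⟨W, hWS, hs hz⟩⟩

lemma sle_trans_s19 {a b c : X} (h1 : sle a b) (h2 : sle b c) : sle a c :=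
  fun U hU ha => h2 U hU (h1 U hU ha)

lemma sle_of_mem_closure {b y : X} (h : b ∈ closure ({y} : Set X)) : sle b y := by
  intro U hU hb
  rcases mem_closure_iff.mp h U hU hb with ⟨z, hzU, hz⟩
  rcases hz with rfl
  exact hzU

/-- In a C-space, for B ⊆ X the following are equivalent:
ρ-density of B, B being a core basis, and density of B in the Skula topology. -/
theorem stmt_19
    (hC : ∀ (x : X) (U : Set X), IsOpen U → x ∈ U →
      ∃ u : X, x ∈ interior (core u) ∧ core u ⊆ U)
    (B : Set X) :
    ((∀ x y : X, rho x y → ∃ b ∈ B, rho x b ∧ rho b y) ↔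
      (∀ (U : Set X) (y : X), IsOpen U → y ∈ U →
        ∃ b ∈ B, b ∈ U ∧ y ∈ interior (core b))) ∧
    ((∀ (U : Set X) (y : X), IsOpen U → y ∈ U →
        ∃ b ∈ B, b ∈ U ∧ y ∈ interior (core b)) ↔
      @Dense X (skula X) B) := by
  constructor
  · constructor
    · intro h1 U y hU hy
      obtain ⟨u, hyu, hsub⟩ := hC y U hU hy
      obtain ⟨b, hb, hub, hby⟩ := h1 u y hyu
      exact ⟨b, hb, hsub (interior_subset hub), hby⟩
    · intro h2 x y hxy
      obtain ⟨b, hb, hbx, hby⟩ := h2 (interior (core x)) y isOpen_interior hxy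
      exact ⟨b, hb, hbx, hby⟩
  · constructor
    · intro h2
      rw [@dense_iff_inter_open X (skula X) B]
      intro V hV ⟨y, hy⟩
      obtain ⟨U, C, hU, hCc, hyU, hyC, hs⟩ := skula_open_mem hV y hy
      obtain ⟨b, hbB, hbU, hby⟩ := h2 U y hU hyU
      have hsle : sle b y := interior_subset hby
      have hbC : b ∈ C := by
        by_contra hbC
        exact (hsle Cᶜ hCc.isOpen_compl hbC) hyC
      exact ⟨b, hs ⟨hbU, hbC⟩, hbB⟩
    · intro hd U y hU hy
      obtain ⟨u, hyu, hsub⟩ := hC y U hU hy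
      obtain ⟨u', hyu', hsub'⟩ := hC y (interior (core u)) isOpen_interior hyu
      have hAopen : TopologicalSpace.GenerateOpen {U : Set X | IsOpen U ∨ IsClosed U}
          (interior (core u) ∩ closure ({u'} : Set X)) :=
        TopologicalSpace.GenerateOpen.inter _ _
          (TopologicalSpace.GenerateOpen.basic _ (Or.inl isOpen_interior))
          (TopologicalSpace.GenerateOpen.basic _ (Or.inr isClosed_closure))
      have hu'A : u' ∈ interior (core u) ∩ closure ({u'} : Set X) :=
        ⟨hsub' (fun _ _ h => h), subset_closure rfl⟩
      obtain ⟨b, hbA, hbB⟩ :=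
        (@dense_iff_inter_open X (skula X) B).mp hd _ hAopen ⟨u', hu'A⟩
      have hsle : sle b u' := sle_of_mem_closure hbA.2
      have hcore : core u' ⊆ core b := fun z hz => sle_trans_s19 hsle hz
      exact ⟨b, hbB, hsub (interior_subset hbA.1),
        interior_mono hcore (by exact hyu')⟩
end
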